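/- For every t ∈ [0,1], ∫₀¹ ∫₀¹ (min(s1,t) − s1 t)(min(s2,t) − s2 t)(min(s1,s2) − s1 s2) ds1 ds2 = t²(1−t)²(1 + 2t(1−t))/45. -/

import Mathlib

open intervalIntegral

/-- Integral of a quartic polynomial via the fundamental theorem of calculus. -/
lemma int_poly (a b c0 c1 c2 c3 c4 : ℝ) :
    ∫ x in a..b, (c0 + c1*x + c2*x^2 + c3*x^3 + c4*x^4)
      = (c0*b + c1*b^2/2 + c2*b^3/3 + c3*b^4/4 + c4*b^5/5)
        - (c0*a + c1*a^2/2 + c2*a^3/3 + c3*a^4/4 + c4*a^5/5) := by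
  have hderiv : ∀ x ∈ Set.uIcc a b,
      HasDerivAt (fun y : ℝ => c0*y + c1*y^2/2 + c2*y^3/3 + c3*y^4/4 + c4*y^5/5)
        (c0 + c1*x + c2*x^2 + c3*x^3 + c4*x^4) x := by
    intro x _
    have hp : ∀ n : ℕ, HasDerivAt (fun y : ℝ => y^n) (n*x^(n-1)) x := fun n =>
      hasDerivAt_pow n x
    have h := (((((hp 1).const_mul c0).add (((hp 2).const_mul c1).div_const 2)).add
      (((hp 3).const_mul c2).div_const 3)).add (((hp 4).const_mul c3).div_const 4)).add
      (((hp 5).const_mul c4).div_const 5)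
    convert h using 1
    · rfl
    · rfl
    · funext y; simp only [Pi.add_apply]; ring
    · norm_num; ring
  rw [intervalIntegral.integral_eq_sub_of_hasDerivAt hderiv
    (Continuous.intervalIntegrable (by continuity) _ _)]

lemma kernel_cont (s1 t : ℝ) :
    Continuous fun s2 : ℝ => (min s2 t - s2*t) * (min s1 s2 - s1*s2) :=
  ((continuous_id.min continuous_const).sub (continuous_id.mul continuous_const)).mul
    ((continuous_const.min continuous_id).sub (continuous_const.mul continuous_id))

/-- Inner integral, case `0 ≤ s1 ≤ t ≤ 1`. -/
lemma inner_le (t s1 : ℝ) (h0 : 0 ≤ s1) (h1 : s1 ≤ t) (h2 : t ≤ 1) :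
    ∫ s2 in (0:ℝ)..1, (min s2 t - s2*t) * (min s1 s2 - s1*s2)
      = ((1-t)*(t^2/2 - t^3/3) + t*(1-t)^3/3) * s1 - (1-t)*s1^3/6 := by
  have hI : ∀ a b : ℝ, IntervalIntegrable
      (fun s2 : ℝ => (min s2 t - s2*t) * (min s1 s2 - s1*s2)) MeasureTheory.volume a b :=
    fun a b => (kernel_cont s1 t).intervalIntegrable a b
  rw [← intervalIntegral.integral_add_adjacent_intervals (a := 0) (b := t) (c := 1)
      (hI 0 t) (hI t 1),
    ← intervalIntegral.integral_add_adjacent_intervals (a := 0) (b := s1) (c := t)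
      (hI 0 s1) (hI s1 t)]
  have p1 : ∫ s2 in (0:ℝ)..s1, (min s2 t - s2*t) * (min s1 s2 - s1*s2)
      = ∫ s2 in (0:ℝ)..s1, ((0:ℝ) + 0*s2 + ((1-t)*(1-s1))*s2^2 + 0*s2^3 + 0*s2^4) := by
    apply intervalIntegral.integral_congr
    intro x hx
    beta_reduce
    rw [Set.uIcc_of_le h0] at hx
    rw [min_eq_left (hx.2.trans h1), min_eq_right hx.2]
    ring
  have p2 : ∫ s2 in s1..t, (min s2 t - s2*t) * (min s1 s2 - s1*s2)
      = ∫ s2 in s1..t, ((0:ℝ) + ((1-t)*s1)*s2 + (-((1-t)*s1))*s2^2 + 0*s2^3 + 0*s2^4) := by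
    apply intervalIntegral.integral_congr
    intro x hx
    beta_reduce
    rw [Set.uIcc_of_le h1] at hx
    rw [min_eq_left hx.2, min_eq_left hx.1]
    ring
  have p3 : ∫ s2 in t..(1:ℝ), (min s2 t - s2*t) * (min s1 s2 - s1*s2)
      = ∫ s2 in t..(1:ℝ), ((s1*t) + (-(2*s1*t))*s2 + (s1*t)*s2^2 + 0*s2^3 + 0*s2^4) := by
    apply intervalIntegral.integral_congr
    intro x hx
    beta_reduce
    rw [Set.uIcc_of_le h2] at hx
    rw [min_eq_right hx.1, min_eq_left (h1.trans hx.1)]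
    ring
  rw [p1, p2, p3, int_poly, int_poly, int_poly]
  ring

/-- Inner integral, case `0 ≤ t ≤ s1 ≤ 1`. -/
lemma inner_ge (t s1 : ℝ) (h0 : 0 ≤ t) (h1 : t ≤ s1) (h2 : s1 ≤ 1) :
    ∫ s2 in (0:ℝ)..1, (min s2 t - s2*t) * (min s1 s2 - s1*s2)
      = ((1-s1)*(s1^2/2 - s1^3/3) + s1*(1-s1)^3/3) * t - (1-s1)*t^3/6 := by
  have hI : ∀ a b : ℝ, IntervalIntegrable
      (fun s2 : ℝ => (min s2 t - s2*t) * (min s1 s2 - s1*s2)) MeasureTheory.volume a b :=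
    fun a b => (kernel_cont s1 t).intervalIntegrable a b
  rw [← intervalIntegral.integral_add_adjacent_intervals (a := 0) (b := s1) (c := 1)
      (hI 0 s1) (hI s1 1),
    ← intervalIntegral.integral_add_adjacent_intervals (a := 0) (b := t) (c := s1)
      (hI 0 t) (hI t s1)]
  have p1 : ∫ s2 in (0:ℝ)..t, (min s2 t - s2*t) * (min s1 s2 - s1*s2)
      = ∫ s2 in (0:ℝ)..t, ((0:ℝ) + 0*s2 + ((1-t)*(1-s1))*s2^2 + 0*s2^3 + 0*s2^4) := by
    apply intervalIntegral.integral_congr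
    intro x hx
    beta_reduce
    rw [Set.uIcc_of_le h0] at hx
    rw [min_eq_left hx.2, min_eq_right (hx.2.trans h1)]
    ring
  have p2 : ∫ s2 in t..s1, (min s2 t - s2*t) * (min s1 s2 - s1*s2)
      = ∫ s2 in t..s1, ((0:ℝ) + (t*(1-s1))*s2 + (-(t*(1-s1)))*s2^2 + 0*s2^3 + 0*s2^4) := by
    apply intervalIntegral.integral_congr
    intro x hx
    beta_reduce
    rw [Set.uIcc_of_le h1] at hx
    rw [min_eq_right hx.1, min_eq_right hx.2]
    ring
  have p3 : ∫ s2 in s1..(1:ℝ), (min s2 t - s2*t) * (min s1 s2 - s1*s2)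
      = ∫ s2 in s1..(1:ℝ), ((s1*t) + (-(2*s1*t))*s2 + (s1*t)*s2^2 + 0*s2^3 + 0*s2^4) := by
    apply intervalIntegral.integral_congr
    intro x hx
    beta_reduce
    rw [Set.uIcc_of_le h2] at hx
    rw [min_eq_right ((h1.trans hx.1)), min_eq_left hx.1]
    ring
  rw [p1, p2, p3, int_poly, int_poly, int_poly]
  ring

/-- For every `t ∈ [0,1]`,
`∫₀¹∫₀¹ (min(s1,t) - s1 t)(min(s2,t) - s2 t)(min(s1,s2) - s1 s2) ds1 ds2
  = t²(1-t)²(1 + 2t(1-t))/45`. -/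
theorem double_integral_drift_brownian_bridge_kernel (t : ℝ) (ht : t ∈ Set.Icc (0:ℝ) 1) :
    (∫ s1 in (0:ℝ)..1, ∫ s2 in (0:ℝ)..1,
      (min s1 t - s1 * t) * (min s2 t - s2 * t) * (min s1 s2 - s1 * s2))
      = t ^ 2 * (1 - t) ^ 2 * (1 + 2 * t * (1 - t)) / 45 := by
  obtain ⟨ht0, ht1⟩ := ht
  have hFc : Continuous (Function.uncurry fun s1 s2 : ℝ =>
      (min s1 t - s1 * t) * (min s2 t - s2 * t) * (min s1 s2 - s1 * s2)) := by
    apply Continuous.mul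
    · apply Continuous.mul
      · exact (continuous_fst.min continuous_const).sub (continuous_fst.mul continuous_const)
      · exact (continuous_snd.min continuous_const).sub (continuous_snd.mul continuous_const)
    · exact (continuous_fst.min continuous_snd).sub (continuous_fst.mul continuous_snd)
  have houter : Continuous fun s1 : ℝ => ∫ s2 in (0:ℝ)..1,
      (min s1 t - s1 * t) * (min s2 t - s2 * t) * (min s1 s2 - s1 * s2) :=
    intervalIntegral.continuous_parametric_intervalIntegral_of_continuous' hFc 0 1
  rw [← intervalIntegral.integral_add_adjacent_intervals (a := 0) (b := t) (c := 1)
      (houter.intervalIntegrable 0 t) (houter.intervalIntegrable t 1)]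
  have key : ∀ s1 : ℝ, (∫ s2 in (0:ℝ)..1,
      (min s1 t - s1 * t) * (min s2 t - s2 * t) * (min s1 s2 - s1 * s2))
      = (min s1 t - s1 * t) * ∫ s2 in (0:ℝ)..1,
        (min s2 t - s2 * t) * (min s1 s2 - s1 * s2) := by
    intro s1
    rw [← intervalIntegral.integral_const_mul]
    congr 1; funext s2; ring
  have o1 : ∫ s1 in (0:ℝ)..t, (∫ s2 in (0:ℝ)..1,
      (min s1 t - s1 * t) * (min s2 t - s2 * t) * (min s1 s2 - s1 * s2))
      = ∫ s1 in (0:ℝ)..t, ((0:ℝ) + 0*s1 + (t/3 - 5*t^2/6 + 2*t^3/3 - t^4/6)*s1^2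
          + 0*s1^3 + (-(1:ℝ)/6 + t/3 - t^2/6)*s1^4) := by
    apply intervalIntegral.integral_congr
    intro s1 hs1
    beta_reduce
    rw [Set.uIcc_of_le ht0] at hs1
    rw [key s1, inner_le t s1 hs1.1 hs1.2 ht1, min_eq_left hs1.2]
    ring
  have o2 : ∫ s1 in t..(1:ℝ), (∫ s2 in (0:ℝ)..1,
      (min s1 t - s1 * t) * (min s2 t - s2 * t) * (min s1 s2 - s1 * s2))
      = ∫ s1 in t..(1:ℝ), ((-(t^4)/6) + (t^2/3 + t^4/3)*s1 + (-(5*t^2)/6 - t^4/6)*s1^2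
          + (2*t^2/3)*s1^3 + (-(t^2)/6)*s1^4) := by
    apply intervalIntegral.integral_congr
    intro s1 hs1
    beta_reduce
    rw [Set.uIcc_of_le ht1] at hs1
    rw [key s1, inner_ge t s1 ht0 hs1.1 hs1.2, min_eq_right hs1.1]
    ring
  rw [o1, o2, int_poly, int_poly]
  ring
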